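/- Let μ be a probability measure with compact support contained in (0, ∞), q_t(ω) := ∏_{j=1}^d (2t)/(4π²ω_j² + t²), and let (X, Y) be a random pair in ℝᵈ × ℝ with E[Y²] < ∞. For i ∈ {1,…,d}, a subset A ⊆ {1,…,d} and β ∈ ℝᵈ, define the extended-real-valued function 𝓝_{i,A}(β) := ∫₀^∞ ∫_{ℝᵈ} ∫_{ℝ} | E[ (Y − E[Y | X_A]) e^{−2πi⟨ω, β∘X⟩} e^{−2πiζX_i} ] |² (1/(2π²ζ²)) dζ · t q_t(ω) dω μ(dt) ∈ [0, ∞]. Then for every fixed i and A, the map β ↦ 𝓝_{i,A}(β) is lower semicontinuous on ℝᵈ. -/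

import Mathlib

set_option maxHeartbeats 1000000


open MeasureTheory Real Filter Topology
open scoped ENNReal

/-- The σ-algebra generated by the coordinates `(X_j)_{j ∈ A}` of `X`. -/
def sigmaCoords {d : ℕ} {Ω : Type} [MeasurableSpace Ω]
    (X : Ω → Fin d → ℝ) (A : Set (Fin d)) : MeasurableSpace Ω :=
  MeasurableSpace.comap (fun p => fun j : A => X p (j : Fin d)) inferInstance

/-- The extended-real-valued quantity `𝓝_{i,A}(β)`:
`∫₀^∞ ∫_{ℝᵈ} ∫_ℝ |E[(Y − E[Y|X_A]) e^{−2πi⟨ω,β∘X⟩} e^{−2πiζX_i}]|² /(2π²ζ²) dζ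
  · t q_t(ω) dω μ(dt) ∈ [0, ∞]`. -/
noncomputable def Ncal {d : ℕ} {Ω : Type} [MeasureSpace Ω]
    (μ : Measure ℝ) (X : Ω → Fin d → ℝ) (Y : Ω → ℝ)
    (i : Fin d) (A : Set (Fin d)) (β : Fin d → ℝ) : ENNReal :=
  ∫⁻ t, (∫⁻ ω : Fin d → ℝ,
      (∫⁻ ζ : ℝ, ENNReal.ofReal
        (‖∫ p, (((Y p - ((volume : Measure Ω)[Y | sigmaCoords X A]) p : ℝ) : ℂ)
            * Complex.exp (-(2 * π * Complex.I) * ((∑ j, ω j * (β j * X p j) : ℝ) : ℂ))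
            * Complex.exp (-(2 * π * Complex.I) * ((ζ * X p i : ℝ) : ℂ))) ∂volume‖ ^ 2
          / (2 * π ^ 2 * ζ ^ 2)))
      * ENNReal.ofReal (t * ∏ j, (2 * t) / (4 * π ^ 2 * (ω j) ^ 2 + t ^ 2))) ∂μ

lemma lsc_lintegral {X α : Type*} [TopologicalSpace X] [FirstCountableTopology X]
    [MeasurableSpace α] {ν : Measure α} {f : X → α → ℝ≥0∞}
    (hm : ∀ x, AEMeasurable (f x) ν)
    (hc : ∀ a, LowerSemicontinuous fun x => f x a) :
    LowerSemicontinuous fun x => ∫⁻ a, f x a ∂ν := by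
  intro x₀ y hy
  by_contra hcon
  rw [Filter.not_eventually] at hcon
  obtain ⟨u, hu, hle⟩ := Filter.exists_seq_forall_of_frequently hcon
  have h1 : ∀ a, f x₀ a ≤ liminf (fun n => f (u n) a) atTop := by
    intro a
    calc f x₀ a ≤ liminf (fun x => f x a) (𝓝 x₀) := (hc a).le_liminf x₀
      _ ≤ liminf (fun x => f x a) (Filter.map u atTop) := liminf_le_liminf_of_le hu
      _ = liminf (fun n => f (u n) a) atTop := by simp [Filter.liminf, Filter.map_map]; rfl
  have key : (∫⁻ a, f x₀ a ∂ν) ≤ y :=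
    (lintegral_mono h1).trans <| (lintegral_liminf_le' fun n => hm (u n)).trans <|
      liminf_le_of_frequently_le' (.of_forall fun n => not_lt.1 (hle n))
  exact absurd hy (not_lt.2 key)

lemma lsc_mul_const {X : Type*} [TopologicalSpace X] {f : X → ℝ≥0∞}
    (hf : LowerSemicontinuous f) {c : ℝ≥0∞} (hc : c ≠ ⊤) :
    LowerSemicontinuous fun x => f x * c := by
  intro x y hy
  rcases eq_or_ne c 0 with rfl | hc0
  · simp at hy
  · have h1 : y / c < f x := ENNReal.div_lt_iff (Or.inl hc0) (Or.inl hc) |>.2 hy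
    filter_upwards [hf x _ h1] with z hz
    exact (ENNReal.div_lt_iff (Or.inl hc0) (Or.inl hc)).1 hz

lemma norm_myexp (r : ℝ) : ‖Complex.exp (-(2 * π * Complex.I) * (r : ℂ))‖ = 1 := by
  rw [Complex.norm_exp]
  simp [Complex.mul_re]

lemma aux_lsc {d : ℕ} (μ : Measure ℝ) (Φ : (Fin d → ℝ) × ℝ × (Fin d → ℝ) → ℂ)
    (hΦc : Continuous Φ) :
    LowerSemicontinuous fun β : Fin d → ℝ =>
      ∫⁻ t, (∫⁻ ω : Fin d → ℝ,
          (∫⁻ ζ : ℝ, ENNReal.ofReal (‖Φ (β, ζ, ω)‖ ^ 2 / (2 * π ^ 2 * ζ ^ 2)))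
        * ENNReal.ofReal (t * ∏ j, (2 * t) / (4 * π ^ 2 * (ω j) ^ 2 + t ^ 2))) ∂μ := by
  set h : (Fin d → ℝ) → ℝ → (Fin d → ℝ) → ℝ≥0∞ := fun β ζ ω =>
      ENNReal.ofReal (‖Φ (β, ζ, ω)‖ ^ 2 / (2 * π ^ 2 * ζ ^ 2)) with hh_def
  have hmeasζ : ∀ (β ω : Fin d → ℝ), Measurable fun ζ => h β ζ ω := by
    intro β ω
    apply ENNReal.measurable_ofReal.comp
    apply Measurable.div
    · exact ((hΦc.comp (continuous_const.prodMk
        (continuous_id.prodMk continuous_const))).norm.pow 2).measurable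
    · exact (measurable_id.pow_const 2).const_mul (2 * π ^ 2)
  have hcβ : ∀ (ζ : ℝ) (ω : Fin d → ℝ), Continuous fun β => h β ζ ω := fun ζ ω =>
    ENNReal.continuous_ofReal.comp
      (((hΦc.comp (continuous_id.prodMk continuous_const)).norm.pow 2).div_const _)
  have hcω : ∀ (β : Fin d → ℝ) (ζ : ℝ), Continuous fun ω => h β ζ ω := fun β ζ =>
    ENNReal.continuous_ofReal.comp
      (((hΦc.comp (continuous_const.prodMk
        (continuous_const.prodMk continuous_id))).norm.pow 2).div_const _)
  have hG_lsc : ∀ ω, LowerSemicontinuous fun β => ∫⁻ ζ, h β ζ ω := fun ω =>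
    lsc_lintegral (fun β => (hmeasζ β ω).aemeasurable)
      (fun ζ => (hcβ ζ ω).lowerSemicontinuous)
  have hG_meas : ∀ β, Measurable fun ω => ∫⁻ ζ, h β ζ ω := fun β =>
    (lsc_lintegral (fun ω => (hmeasζ β ω).aemeasurable)
      (fun ζ => (hcω β ζ).lowerSemicontinuous)).measurable
  set w : ℝ → (Fin d → ℝ) → ℝ≥0∞ := fun t ω =>
      ENNReal.ofReal (t * ∏ j, (2 * t) / (4 * π ^ 2 * (ω j) ^ 2 + t ^ 2)) with hw_def
  have hw_meas : Measurable fun q : ℝ × (Fin d → ℝ) => w q.1 q.2 := by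
    apply ENNReal.measurable_ofReal.comp
    apply Measurable.mul measurable_fst
    apply Finset.measurable_prod
    intro j _
    apply Measurable.div
    · exact measurable_fst.const_mul 2
    · exact ((((measurable_pi_apply j).comp measurable_snd).pow_const 2).const_mul
        (4 * π ^ 2)).add (measurable_fst.pow_const 2)
  have hwω_meas : ∀ t, Measurable fun ω => w t ω := fun t =>
    hw_meas.comp (measurable_const.prodMk measurable_id)
  have hH_lsc : ∀ t, LowerSemicontinuous fun β => ∫⁻ ω, (∫⁻ ζ, h β ζ ω) * w t ω := fun t =>
    lsc_lintegral (fun β => ((hG_meas β).mul (hwω_meas t)).aemeasurable)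
      (fun ω => lsc_mul_const (hG_lsc ω) ENNReal.ofReal_ne_top)
  have hH_meas : ∀ β, Measurable fun t => ∫⁻ ω, (∫⁻ ζ, h β ζ ω) * w t ω := fun β =>
    Measurable.lintegral_prod_right' (((hG_meas β).comp measurable_snd).mul hw_meas)
  exact lsc_lintegral (fun β => (hH_meas β).aemeasurable) hH_lsc


/-- for every fixed `i` and `A`, the map `β ↦ 𝓝_{i,A}(β)` is lower
semicontinuous on `ℝᵈ`. -/
theorem stmt19 {d : ℕ} (hd : 1 ≤ d)
    (μ : Measure ℝ) [IsProbabilityMeasure μ]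
    (hμsupp : ∃ a b : ℝ, 0 < a ∧ a ≤ b ∧ μ (Set.Icc a b) = 1)
    {Ω : Type} [MeasureSpace Ω] [IsProbabilityMeasure (volume : Measure Ω)]
    (X : Ω → Fin d → ℝ) (Y : Ω → ℝ) (hX : Measurable X) (hY : Measurable Y)
    (hY2 : Integrable (fun p => (Y p) ^ 2) volume)
    (i : Fin d) (A : Set (Fin d)) :
    LowerSemicontinuous (fun β : Fin d → ℝ => Ncal μ X Y i A β) := by
  have hgint : Integrable (fun p => Y p - ((volume : Measure Ω)[Y | sigmaCoords X A]) p) volume := by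
    have hYi : Integrable Y volume :=
      ((memLp_two_iff_integrable_sq hY.aestronglyMeasurable).2 hY2).integrable one_le_two
    exact hYi.sub integrable_condExp
  have hXj : ∀ j : Fin d, Measurable fun p => X p j := fun j => (measurable_pi_apply j).comp hX
  have hΦc : Continuous fun q : (Fin d → ℝ) × ℝ × (Fin d → ℝ) => ∫ p,
      (((Y p - ((volume : Measure Ω)[Y | sigmaCoords X A]) p : ℝ) : ℂ))
        * Complex.exp (-(2 * π * Complex.I) * ((∑ j, q.2.2 j * (q.1 j * X p j) : ℝ) : ℂ))
        * Complex.exp (-(2 * π * Complex.I) * ((q.2.1 * X p i : ℝ) : ℂ)) ∂volume := by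
    apply continuous_of_dominated (bound := fun p => |Y p - ((volume : Measure Ω)[Y | sigmaCoords X A]) p|)
    · rintro ⟨β, ζ, ω⟩
      have h1 : AEStronglyMeasurable (fun a => ((Y a - ((volume : Measure Ω)[Y | sigmaCoords X A]) a : ℝ) : ℂ)) volume :=
        Complex.continuous_ofReal.comp_aestronglyMeasurable hgint.1
      have h2 : Measurable fun a =>
          Complex.exp (-(2 * π * Complex.I) * ((∑ j, ω j * (β j * X a j) : ℝ) : ℂ)) := by
        refine Complex.measurable_exp.comp (Measurable.const_mul ?_ _)
        exact Complex.measurable_ofReal.comp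
          (Finset.measurable_sum _ fun j _ => ((hXj j).const_mul (β j)).const_mul (ω j))
      have h3 : Measurable fun a =>
          Complex.exp (-(2 * π * Complex.I) * ((ζ * X a i : ℝ) : ℂ)) := by
        refine Complex.measurable_exp.comp (Measurable.const_mul ?_ _)
        exact Complex.measurable_ofReal.comp ((hXj i).const_mul ζ)
      exact (h1.mul h2.aestronglyMeasurable).mul h3.aestronglyMeasurable
    · rintro ⟨β, ζ, ω⟩
      filter_upwards with p
      rw [norm_mul, norm_mul, norm_myexp, norm_myexp, mul_one, mul_one, Complex.norm_real,
        Real.norm_eq_abs]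
    · exact hgint.abs
    · filter_upwards with p
      have c1 : Continuous fun q : (Fin d → ℝ) × ℝ × (Fin d → ℝ) =>
          (∑ j, q.2.2 j * (q.1 j * X p j) : ℝ) :=
        continuous_finset_sum _ fun j _ =>
          ((continuous_apply j).comp (continuous_snd.comp continuous_snd)).mul
            (((continuous_apply j).comp continuous_fst).mul continuous_const)
      have c2 : Continuous fun q : (Fin d → ℝ) × ℝ × (Fin d → ℝ) => (q.2.1 * X p i : ℝ) :=
        (continuous_fst.comp continuous_snd).mul continuous_const
      exact (continuous_const.mul (Complex.continuous_exp.comp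
          (continuous_const.mul (Complex.continuous_ofReal.comp c1)))).mul
        (Complex.continuous_exp.comp (continuous_const.mul (Complex.continuous_ofReal.comp c2)))
  have hEq : (fun β : Fin d → ℝ => Ncal μ X Y i A β) = fun β : Fin d → ℝ =>
      ∫⁻ t, (∫⁻ ω : Fin d → ℝ,
          (∫⁻ ζ : ℝ, ENNReal.ofReal (‖(fun q : (Fin d → ℝ) × ℝ × (Fin d → ℝ) => ∫ p,
            (((Y p - ((volume : Measure Ω)[Y | sigmaCoords X A]) p : ℝ) : ℂ))
              * Complex.exp (-(2 * π * Complex.I) * ((∑ j, q.2.2 j * (q.1 j * X p j) : ℝ) : ℂ))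
              * Complex.exp (-(2 * π * Complex.I) * ((q.2.1 * X p i : ℝ) : ℂ)) ∂volume)
            (β, ζ, ω)‖ ^ 2 / (2 * π ^ 2 * ζ ^ 2)))
        * ENNReal.ofReal (t * ∏ j, (2 * t) / (4 * π ^ 2 * (ω j) ^ 2 + t ^ 2))) ∂μ := by
    funext β
    rw [Ncal]
  rw [hEq]
  exact aux_lsc μ (fun q : (Fin d → ℝ) × ℝ × (Fin d → ℝ) => ∫ p,
            (((Y p - ((volume : Measure Ω)[Y | sigmaCoords X A]) p : ℝ) : ℂ))
              * Complex.exp (-(2 * π * Complex.I) * ((∑ j, q.2.2 j * (q.1 j * X p j) : ℝ) : ℂ))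
              * Complex.exp (-(2 * π * Complex.I) * ((q.2.1 * X p i : ℝ) : ℂ)) ∂volume) hΦc
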